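/- Let w : ℝ × ℝ² → ℝ be C², fix a unit vector ω ∈ ℝ², and for r > 0, t ≥ 0 define W(t, r) = r^{1/2} w(t, r ω). Then for all t ≥ 0 and r > 0, ∂₊W(t, r) − ∂₊W(0, r + t) = ∫₀ᵗ [ (r + t − s)^{1/2} (□w)(s, (r+t−s)ω) + (r + t − s)^{−3/2} ( w/4 + Ω²w )(s, (r+t−s)ω) ] ds, where ∂₊ = ∂ₜ + ∂ᵣ, □w = ∂ₜ²w − Δw, and Ω = x₁∂₂ − x₂∂₁ is the angular derivative. -/

import Mathlib

open Real

/-- directional partial derivative on ℝ × ℝ² ≅ ℝ × ℝ × ℝ -/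
noncomputable def pd (v : ℝ × ℝ × ℝ) (f : ℝ × ℝ × ℝ → ℝ) (p : ℝ × ℝ × ℝ) : ℝ :=
  fderiv ℝ f p v

def et : ℝ × ℝ × ℝ := (1, 0, 0)
def ex1 : ℝ × ℝ × ℝ := (0, 1, 0)
def ex2 : ℝ × ℝ × ℝ := (0, 0, 1)

/-- the flat wave operator □ = ∂ₜ² − ∂₁² − ∂₂² -/
noncomputable def Box (f : ℝ × ℝ × ℝ → ℝ) (p : ℝ × ℝ × ℝ) : ℝ :=
  pd et (pd et f) p - pd ex1 (pd ex1 f) p - pd ex2 (pd ex2 f) p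

/-- the angular derivative Ω = x₁∂₂ − x₂∂₁ -/
noncomputable def OmegaD (f : ℝ × ℝ × ℝ → ℝ) (p : ℝ × ℝ × ℝ) : ℝ :=
  p.2.1 * pd ex2 f p - p.2.2 * pd ex1 f p

section aux

variable {w : ℝ × ℝ × ℝ → ℝ}

lemma hd1 (hw : ContDiff ℝ 2 w) (y : ℝ × ℝ × ℝ) : HasFDerivAt w (fderiv ℝ w y) y :=
  (hw.differentiable (by norm_num) y).hasFDerivAt

lemma hd2 (hw : ContDiff ℝ 2 w) (x : ℝ × ℝ × ℝ) :
    HasFDerivAt (fderiv ℝ w) (fderiv ℝ (fderiv ℝ w) x) x :=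
  (((hw.fderiv_right (m := 1) (by norm_num)).differentiable (by norm_num)) x).hasFDerivAt

lemma hsymm (hw : ContDiff ℝ 2 w) (x a b : ℝ × ℝ × ℝ) :
    fderiv ℝ (fderiv ℝ w) x a b = fderiv ℝ (fderiv ℝ w) x b a :=
  second_derivative_symmetric (hd1 hw) (hd2 hw x) a b

lemma hdir (hw : ContDiff ℝ 2 w) (v x : ℝ × ℝ × ℝ) :
    HasFDerivAt (fun y => fderiv ℝ w y v) ((fderiv ℝ (fderiv ℝ w) x).flip v) x := by
  simpa using (hd2 hw x).clm_apply (hasFDerivAt_const v x)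

lemma pd_pd (hw : ContDiff ℝ 2 w) (a b x : ℝ × ℝ × ℝ) :
    pd a (pd b w) x = fderiv ℝ (fderiv ℝ w) x a b := by
  unfold pd
  rw [(hdir hw b x).fderiv]
  rfl

lemma box_eq (hw : ContDiff ℝ 2 w) (p : ℝ × ℝ × ℝ) :
    Box w p = fderiv ℝ (fderiv ℝ w) p et et - fderiv ℝ (fderiv ℝ w) p ex1 ex1
      - fderiv ℝ (fderiv ℝ w) p ex2 ex2 := by
  unfold Box
  rw [pd_pd hw, pd_pd hw, pd_pd hw]

lemma pd_omega (hw : ContDiff ℝ 2 w) (a x : ℝ × ℝ × ℝ) :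
    pd a (OmegaD w) x = a.2.1 * fderiv ℝ w x ex2 + x.2.1 * fderiv ℝ (fderiv ℝ w) x a ex2
      - (a.2.2 * fderiv ℝ w x ex1 + x.2.2 * fderiv ℝ (fderiv ℝ w) x a ex1) := by
  have h1 : HasFDerivAt (fun y : ℝ × ℝ × ℝ => y.2.1)
      ((ContinuousLinearMap.fst ℝ ℝ ℝ).comp (ContinuousLinearMap.snd ℝ ℝ (ℝ × ℝ))) x :=
    hasFDerivAt_fst.comp x hasFDerivAt_snd
  have h2 : HasFDerivAt (fun y : ℝ × ℝ × ℝ => y.2.2)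
      ((ContinuousLinearMap.snd ℝ ℝ ℝ).comp (ContinuousLinearMap.snd ℝ ℝ (ℝ × ℝ))) x :=
    hasFDerivAt_snd.comp x hasFDerivAt_snd
  have h5 : HasFDerivAt (OmegaD w) _ x := (h1.mul (hdir hw ex2 x)).sub (h2.mul (hdir hw ex1 x))
  unfold pd
  rw [h5.fderiv]
  simp [pd]
  ring

lemma omega_omega (hw : ContDiff ℝ 2 w) (x : ℝ × ℝ × ℝ) :
    OmegaD (OmegaD w) x
      = x.2.1 ^ 2 * fderiv ℝ (fderiv ℝ w) x ex2 ex2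
        + x.2.2 ^ 2 * fderiv ℝ (fderiv ℝ w) x ex1 ex1
        - x.2.1 * x.2.2 * (fderiv ℝ (fderiv ℝ w) x ex2 ex1 + fderiv ℝ (fderiv ℝ w) x ex1 ex2)
        - x.2.1 * fderiv ℝ w x ex1 - x.2.2 * fderiv ℝ w x ex2 := by
  show x.2.1 * pd ex2 (OmegaD w) x - x.2.2 * pd ex1 (OmegaD w) x = _
  rw [pd_omega hw ex2 x, pd_omega hw ex1 x]
  simp [ex1, ex2]
  ring

lemma stepA (hw : ContDiff ℝ 2 w) (ω : ℝ × ℝ) (q : ℝ × ℝ) (hq : 0 < q.2) :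
    fderiv ℝ (fun q : ℝ × ℝ => q.2 ^ ((1:ℝ)/2) * w (q.1, q.2 * ω.1, q.2 * ω.2)) q (1, 1)
      = 1/2 * q.2 ^ (-(1:ℝ)/2) * w (q.1, q.2 * ω.1, q.2 * ω.2)
        + q.2 ^ ((1:ℝ)/2) * fderiv ℝ w (q.1, q.2 * ω.1, q.2 * ω.2) (1, ω.1, ω.2) := by
  have hin : HasFDerivAt (fun q : ℝ × ℝ => ((q.1, q.2 * ω.1, q.2 * ω.2) : ℝ × ℝ × ℝ))
      ((ContinuousLinearMap.fst ℝ ℝ ℝ).prod ((ω.1 • ContinuousLinearMap.snd ℝ ℝ ℝ).prod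
        (ω.2 • ContinuousLinearMap.snd ℝ ℝ ℝ))) q :=
    hasFDerivAt_fst.prodMk ((hasFDerivAt_snd.mul_const ω.1).prodMk (hasFDerivAt_snd.mul_const ω.2))
  have hg : HasFDerivAt (fun q : ℝ × ℝ => w (q.1, q.2 * ω.1, q.2 * ω.2)) _ q :=
    (hd1 hw (q.1, q.2 * ω.1, q.2 * ω.2)).comp q hin
  have hh : HasFDerivAt (fun q : ℝ × ℝ => q.2 ^ ((1:ℝ)/2))
      (((1:ℝ)/2 * q.2 ^ ((1:ℝ)/2 - 1)) • ContinuousLinearMap.snd ℝ ℝ ℝ) q :=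
    (Real.hasDerivAt_rpow_const (p := (1:ℝ)/2) (Or.inl hq.ne')).comp_hasFDerivAt q hasFDerivAt_snd
  have hW : HasFDerivAt (fun q : ℝ × ℝ => q.2 ^ ((1:ℝ)/2) * w (q.1, q.2 * ω.1, q.2 * ω.2)) _ q :=
    hh.mul hg
  rw [hW.fderiv]
  have hexp : (1:ℝ)/2 - 1 = -(1:ℝ)/2 := by norm_num
  simp [hexp]
  ring

end aux

/-- Integration of the reduced wave equation along incoming null rays:
∂₊(r^{1/2}w)(t, rω) − ∂₊(r^{1/2}w)(0, (r+t)ω) =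
∫₀ᵗ [(r+t−s)^{1/2} □w + (r+t−s)^{−3/2}(w/4 + Ω²w)](s, (r+t−s)ω) ds. -/
theorem null_ray_integration (w : ℝ × ℝ × ℝ → ℝ) (hw : ContDiff ℝ 2 w)
    (ω : ℝ × ℝ) (hω : ω.1 ^ 2 + ω.2 ^ 2 = 1) :
    ∀ t : ℝ, 0 ≤ t → ∀ r : ℝ, 0 < r →
      fderiv ℝ (fun q : ℝ × ℝ => q.2 ^ ((1:ℝ)/2) * w (q.1, q.2 * ω.1, q.2 * ω.2))
          (t, r) (1, 1)
        - fderiv ℝ (fun q : ℝ × ℝ => q.2 ^ ((1:ℝ)/2) * w (q.1, q.2 * ω.1, q.2 * ω.2))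
            (0, r + t) (1, 1)
      = ∫ s in (0:ℝ)..t,
          ((r + t - s) ^ ((1:ℝ)/2) * Box w (s, (r + t - s) * ω.1, (r + t - s) * ω.2)
            + (r + t - s) ^ (-(3:ℝ)/2)
              * (w (s, (r + t - s) * ω.1, (r + t - s) * ω.2) / 4
                + OmegaD (OmegaD w) (s, (r + t - s) * ω.1, (r + t - s) * ω.2))) := by
  intro t ht r hr
  have key : ∀ s ∈ Set.uIcc (0:ℝ) t, HasDerivAt
      (fun s : ℝ => 1/2 * (r + t - s) ^ (-(1:ℝ)/2) * w (s, (r + t - s) * ω.1, (r + t - s) * ω.2)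
        + (r + t - s) ^ ((1:ℝ)/2)
          * fderiv ℝ w (s, (r + t - s) * ω.1, (r + t - s) * ω.2) (1, ω.1, ω.2))
      ((r + t - s) ^ ((1:ℝ)/2) * Box w (s, (r + t - s) * ω.1, (r + t - s) * ω.2)
        + (r + t - s) ^ (-(3:ℝ)/2)
          * (w (s, (r + t - s) * ω.1, (r + t - s) * ω.2) / 4
            + OmegaD (OmegaD w) (s, (r + t - s) * ω.1, (r + t - s) * ω.2))) s := by
    intro s hs
    rw [Set.uIcc_of_le ht] at hs
    have hρ : 0 < r + t - s := by have := hs.2; linarith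
    have hρd : HasDerivAt (fun s : ℝ => r + t - s) (-1) s := by
      simpa using (hasDerivAt_id s).const_sub (r + t)
    have hXd : HasDerivAt (fun s : ℝ => ((s, (r + t - s) * ω.1, (r + t - s) * ω.2) : ℝ × ℝ × ℝ))
        ((1 : ℝ), -1 * ω.1, -1 * ω.2) s :=
      (hasDerivAt_id s).prodMk ((hρd.mul_const ω.1).prodMk (hρd.mul_const ω.2))
    have hwX : HasDerivAt (fun s : ℝ => w (s, (r + t - s) * ω.1, (r + t - s) * ω.2))
        (fderiv ℝ w (s, (r + t - s) * ω.1, (r + t - s) * ω.2) ((1 : ℝ), -1 * ω.1, -1 * ω.2)) s :=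
      (hd1 hw _).comp_hasDerivAt s hXd
    have hφX : HasDerivAt
        (fun s : ℝ => fderiv ℝ w (s, (r + t - s) * ω.1, (r + t - s) * ω.2) (1, ω.1, ω.2))
        (fderiv ℝ (fderiv ℝ w) (s, (r + t - s) * ω.1, (r + t - s) * ω.2)
          ((1 : ℝ), -1 * ω.1, -1 * ω.2) (1, ω.1, ω.2)) s := by
      exact
        (hdir hw (1, ω.1, ω.2) (s, (r + t - s) * ω.1, (r + t - s) * ω.2)).comp_hasDerivAt s hXd
    have h1 : HasDerivAt (fun s : ℝ => (r + t - s) ^ (-(1:ℝ)/2))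
        (-1 * (-(1:ℝ)/2) * (r + t - s) ^ (-(1:ℝ)/2 - 1)) s := hρd.rpow_const (Or.inl hρ.ne')
    have h2 : HasDerivAt (fun s : ℝ => (r + t - s) ^ ((1:ℝ)/2))
        (-1 * ((1:ℝ)/2) * (r + t - s) ^ ((1:ℝ)/2 - 1)) s := hρd.rpow_const (Or.inl hρ.ne')
    have hD := ((h1.const_mul (1/2 : ℝ)).mul hwX).add (h2.mul hφX)
    refine hD.congr_deriv (Eq.symm ?_)
    rw [box_eq hw, omega_omega hw]
    have hu : ((1:ℝ), ω.1, ω.2) = et + ω.1 • ex1 + ω.2 • ex2 := by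
      simp [et, ex1, ex2, Prod.ext_iff]
    have hm : ((1:ℝ), -1 * ω.1, -1 * ω.2) = et + (-ω.1) • ex1 + (-ω.2) • ex2 := by
      simp [et, ex1, ex2, Prod.ext_iff]
    rw [hu, hm]
    simp only [map_add, map_smul, ContinuousLinearMap.add_apply, ContinuousLinearMap.smul_apply,
      smul_eq_mul, ContinuousLinearMap.coe_smul', Pi.smul_apply]
    rw [hsymm hw _ ex1 et, hsymm hw _ ex2 et, hsymm hw _ ex2 ex1]
    rw [show -(1:ℝ)/2 - 1 = -(3:ℝ)/2 by norm_num, show (1:ℝ)/2 - 1 = -(1:ℝ)/2 by norm_num]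
    have e1 : (r + t - s) ^ (-(3:ℝ)/2) * (r + t - s) ^ (2:ℕ) = (r + t - s) ^ ((1:ℝ)/2) := by
      rw [← Real.rpow_natCast (r + t - s) 2, ← Real.rpow_add hρ]; norm_num
    have e2 : (r + t - s) ^ (-(3:ℝ)/2) * (r + t - s) = (r + t - s) ^ (-(1:ℝ)/2) := by
      nth_rw 2 [← Real.rpow_one (r + t - s)]
      rw [← Real.rpow_add hρ]; norm_num
    rw [← e1, ← e2]
    linear_combination ((r + t - s) ^ (-(3:ℝ)/2) * (r + t - s) ^ (2:ℕ)
      * (fderiv ℝ (fderiv ℝ w) (s, (r + t - s) * ω.1, (r + t - s) * ω.2) ex1 ex1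
        + fderiv ℝ (fderiv ℝ w) (s, (r + t - s) * ω.1, (r + t - s) * ω.2) ex2 ex2)) * hω
  have hXc : Continuous (fun s : ℝ => ((s, (r + t - s) * ω.1, (r + t - s) * ω.2) : ℝ × ℝ × ℝ)) := by
    fun_prop
  have hC1 : Continuous (fderiv ℝ w) := hw.continuous_fderiv (by norm_num)
  have hC2 : Continuous (fderiv ℝ (fderiv ℝ w)) :=
    (hw.fderiv_right (m := 1) (by norm_num)).continuous_fderiv one_ne_zero
  have hH : ∀ a b : ℝ × ℝ × ℝ, Continuous (fun p : ℝ × ℝ × ℝ => fderiv ℝ (fderiv ℝ w) p a b) :=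
    fun a b => (hC2.clm_apply continuous_const).clm_apply continuous_const
  have hDc : ∀ a : ℝ × ℝ × ℝ, Continuous (fun p : ℝ × ℝ × ℝ => fderiv ℝ w p a) :=
    fun a => hC1.clm_apply continuous_const
  have hBoxc : Continuous (Box w) := by
    rw [funext (box_eq hw)]
    exact ((hH et et).sub (hH ex1 ex1)).sub (hH ex2 ex2)
  have hOmc : Continuous (OmegaD (OmegaD w)) := by
    rw [funext (omega_omega hw)]
    exact (((((continuous_snd.fst.pow 2).mul (hH ex2 ex2)).add
      ((continuous_snd.snd.pow 2).mul (hH ex1 ex1))).sub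
      ((continuous_snd.fst.mul continuous_snd.snd).mul ((hH ex2 ex1).add (hH ex1 ex2)))).sub
      (continuous_snd.fst.mul (hDc ex1))).sub (continuous_snd.snd.mul (hDc ex2))
  have hρpos : ∀ x ∈ Set.uIcc (0:ℝ) t, 0 < r + t - x := by
    intro x hx
    rw [Set.uIcc_of_le ht] at hx
    have := hx.2; linarith
  have hρc : ContinuousOn (fun s : ℝ => r + t - s) (Set.uIcc 0 t) := by fun_prop
  have hint : IntervalIntegrable
      (fun s : ℝ => (r + t - s) ^ ((1:ℝ)/2) * Box w (s, (r + t - s) * ω.1, (r + t - s) * ω.2)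
        + (r + t - s) ^ (-(3:ℝ)/2)
          * (w (s, (r + t - s) * ω.1, (r + t - s) * ω.2) / 4
            + OmegaD (OmegaD w) (s, (r + t - s) * ω.1, (r + t - s) * ω.2)))
      MeasureTheory.volume 0 t := by
    apply ContinuousOn.intervalIntegrable
    exact ((hρc.rpow_const fun x hx => Or.inl (hρpos x hx).ne').mul
        (hBoxc.comp hXc).continuousOn).add
      ((hρc.rpow_const fun x hx => Or.inl (hρpos x hx).ne').mul
        (((hw.continuous.comp hXc).continuousOn.div_const 4).add (hOmc.comp hXc).continuousOn))
  have main := intervalIntegral.integral_eq_sub_of_hasDerivAt key hint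
  rw [main]
  rw [stepA hw ω (t, r) hr, stepA hw ω (0, r + t) (by dsimp only; linarith)]
  have ht1 : r + t - t = r := by ring
  have ht2 : r + t - 0 = r + t := by ring
  simp only [ht1, ht2]
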